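/- arXiv:1705.01980 — 5 statements merged into one kernel-verified Lean document; each statement's English description precedes it below -/
import Mathlib

section
/- Let q ≠ 0, 1 and α ≠ 0. Define f(s) = q^{-s/2} α^{1/2} - q^{s/2} α^{-1/2}, and let h_j be the continuous q^{-1}-Hermite polynomials defined by 2x h_j(x|q) = h_{j+1}(x|q) + (q^{-j} - 1) h_{j-1}(x|q), h_{-1} = 0, h_0 = 1. Then for all integers n ≥ 0: (α^n / q^{n(n+1)/2}) · Σ_{j=0}^n (-1)^j · binom_q(n,j) · q^{j(j+1)/2} · (qα)^{-j/2} · h_j( f(1)/2 | q ) = 1, where binom_q(n,j) = (q;q)_n / ((q;q)_{n-j} (q;q)_j) is the q-binomial coefficient. -/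
open Finset

/-- The `q`-Pochhammer symbol `(a;q)_n = ∏_{i=0}^{n-1} (1 - a q^i)`. -/
noncomputable def qPoch (a q : ℝ) (n : ℕ) : ℝ := ∏ i ∈ Finset.range n, (1 - a * q ^ i)

noncomputable def Cq (q : ℝ) (n j : ℕ) : ℝ :=
  qPoch q q n / (qPoch q q (n - j) * qPoch q q j)

lemma qPoch_succ (a q : ℝ) (n : ℕ) :
    qPoch a q (n + 1) = qPoch a q n * (1 - a * q ^ n) := Finset.prod_range_succ _ _

lemma qPoch_zero (a q : ℝ) : qPoch a q 0 = 1 := Finset.prod_range_zero _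

lemma one_sub_pow_ne {q : ℝ} (hpoch : ∀ m : ℕ, qPoch q q m ≠ 0) (m : ℕ) :
    (1 : ℝ) - q ^ (m + 1) ≠ 0 := by
  have h := hpoch (m + 1)
  rw [qPoch_succ] at h
  intro hc
  apply h
  have : q * q ^ m = q ^ (m + 1) := by rw [pow_succ]; ring
  rw [this, hc, mul_zero]

lemma Cq_zero {q : ℝ} (hpoch : ∀ m : ℕ, qPoch q q m ≠ 0) (n : ℕ) : Cq q n 0 = 1 := by
  simp [Cq, qPoch_zero, div_self (hpoch n)]

lemma Cq_self {q : ℝ} (hpoch : ∀ m : ℕ, qPoch q q m ≠ 0) (n : ℕ) : Cq q n n = 1 := by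
  simp [Cq, Nat.sub_self, qPoch_zero, div_self (hpoch n)]

lemma Cq_pascal {q : ℝ} (hpoch : ∀ m : ℕ, qPoch q q m ≠ 0) {k n : ℕ} (hk : k ≤ n) :
    Cq q (n + 2) (k + 1) = Cq q (n + 1) (k + 1) + q ^ (n + 1 - k) * Cq q (n + 1) k := by
  obtain ⟨e, rfl⟩ := Nat.exists_eq_add_of_le hk
  have i1 : k + e + 2 - (k + 1) = e + 1 := by omega
  have i2 : k + e + 1 - (k + 1) = e := by omega
  have i3 : k + e + 1 - k = e + 1 := by omega
  rw [Cq, Cq, Cq, i1, i2, i3]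
  rw [qPoch_succ q q (k + e + 1), qPoch_succ q q (k + e), qPoch_succ q q e,
    qPoch_succ q q k]
  have hne : qPoch q q e ≠ 0 := hpoch e
  have hnk : qPoch q q k ≠ 0 := hpoch k
  have hnke : qPoch q q (k + e) ≠ 0 := hpoch (k + e)
  have h1 : (1 : ℝ) - q * q ^ e ≠ 0 := by
    have := one_sub_pow_ne hpoch e; rwa [pow_succ, mul_comm (q ^ e) q] at this
  have h2 : (1 : ℝ) - q * q ^ k ≠ 0 := by
    have := one_sub_pow_ne hpoch k; rwa [pow_succ, mul_comm (q ^ k) q] at this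
  field_simp
  ring

lemma Cq_absorb {q : ℝ} (hpoch : ∀ m : ℕ, qPoch q q m ≠ 0) {m n : ℕ} (hm : m ≤ n) :
    (1 - q ^ (m + 1)) * Cq q (n + 1) (m + 1) = (1 - q ^ (n + 1)) * Cq q n m := by
  obtain ⟨e, rfl⟩ := Nat.exists_eq_add_of_le hm
  have i1 : m + e + 1 - (m + 1) = e := by omega
  have i2 : m + e - m = e := by omega
  rw [Cq, Cq, i1, i2]
  rw [qPoch_succ q q (m + e), qPoch_succ q q m]
  have hne : qPoch q q e ≠ 0 := hpoch e
  have hnm : qPoch q q m ≠ 0 := hpoch m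
  have hnme : qPoch q q (m + e) ≠ 0 := hpoch (m + e)
  have h2 : (1 : ℝ) - q * q ^ m ≠ 0 := by
    have := one_sub_pow_ne hpoch m; rwa [pow_succ, mul_comm (q ^ m) q] at this
  field_simp
  ring

noncomputable def tT (p b : ℝ) (h : ℕ → ℝ → ℝ) (n j : ℕ) : ℝ :=
  (-1 : ℝ) ^ j * Cq (p ^ 2) n j * (p ^ (j * j) / b ^ j) * h j ((p⁻¹ * b - p * b⁻¹) / 2)

noncomputable def eE (p b : ℝ) (h : ℕ → ℝ → ℝ) (n k : ℕ) : ℝ :=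
  (-1 : ℝ) ^ (k + 1) * (p ^ 2) ^ (n + 1 - k) * Cq (p ^ 2) (n + 1) k *
    (p ^ ((k + 1) * (k + 1)) / b ^ (k + 1)) * h (k + 1) ((p⁻¹ * b - p * b⁻¹) / 2)

noncomputable def Sfun (p b : ℝ) (h : ℕ → ℝ → ℝ) (n : ℕ) : ℝ :=
  ∑ j ∈ Finset.range (n + 1), tT p b h n j

lemma L1 {p b : ℝ} (hpoch : ∀ m : ℕ, qPoch (p ^ 2) (p ^ 2) m ≠ 0)
    (h : ℕ → ℝ → ℝ) {n k : ℕ} (hk : k ≤ n) :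
    tT p b h (n + 2) (k + 1) = tT p b h (n + 1) (k + 1) + eE p b h n k := by
  unfold tT eE
  rw [Cq_pascal hpoch hk]
  ring

lemma L2 {p b : ℝ} (hpoch : ∀ m : ℕ, qPoch (p ^ 2) (p ^ 2) m ≠ 0)
    (h : ℕ → ℝ → ℝ) (n : ℕ) :
    tT p b h (n + 2) (n + 2) = eE p b h n (n + 1) := by
  unfold tT eE
  rw [Cq_self hpoch, Cq_self hpoch, Nat.sub_self, pow_zero]
  ring

lemma L3 {p b : ℝ} (hpoch : ∀ m : ℕ, qPoch (p ^ 2) (p ^ 2) m ≠ 0)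
    (h : ℕ → ℝ → ℝ) (n : ℕ) : tT p b h (n + 2) 0 = tT p b h (n + 1) 0 := by
  unfold tT
  rw [Cq_zero hpoch, Cq_zero hpoch]

lemma L4 {p b : ℝ} (hp : p ≠ 0) (hb : b ≠ 0)
    (h : ℕ → ℝ → ℝ) {n k : ℕ} (hk : k ≤ n + 1) :
    (-1 : ℝ) ^ (k + 1) * (p ^ 2) ^ (n + 1 - k) * Cq (p ^ 2) (n + 1) k *
      (p ^ ((k + 1) * (k + 1)) / b ^ (k + 1)) *
      (2 * ((p⁻¹ * b - p * b⁻¹) / 2) * h k ((p⁻¹ * b - p * b⁻¹) / 2))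
    = ((p ^ 2) ^ (n + 2) / b ^ 2 - (p ^ 2) ^ (n + 1)) * tT p b h (n + 1) k := by
  obtain ⟨e, he⟩ := Nat.exists_eq_add_of_le hk
  have i1 : n + 1 - k = e := by omega
  unfold tT
  rw [i1, show n + 2 = k + e + 1 by omega, show n + 1 = k + e by omega]
  generalize h k ((p⁻¹ * b - p * b⁻¹) / 2) = X
  field_simp
  ring

lemma L5 {p b : ℝ} (hp : p ≠ 0) (hb : b ≠ 0)
    (hpoch : ∀ m : ℕ, qPoch (p ^ 2) (p ^ 2) m ≠ 0)
    (h : ℕ → ℝ → ℝ)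
    (hrec : ∀ (n : ℕ) (x : ℝ),
      h (n + 2) x = 2 * x * h (n + 1) x - ((p ^ 2) ^ (-(n + 1 : ℤ)) - 1) * h n x)
    {n m : ℕ} (hm : m ≤ n) :
    eE p b h n (m + 1) =
      (-1 : ℝ) ^ (m + 1 + 1) * (p ^ 2) ^ (n + 1 - (m + 1)) * Cq (p ^ 2) (n + 1) (m + 1) *
        (p ^ ((m + 1 + 1) * (m + 1 + 1)) / b ^ (m + 1 + 1)) *
        (2 * ((p⁻¹ * b - p * b⁻¹) / 2) * h (m + 1) ((p⁻¹ * b - p * b⁻¹) / 2))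
      - ((p ^ 2) ^ (n + 1) * (1 - (p ^ 2) ^ (n + 1)) / b ^ 2) * tT p b h n m := by
  have habs := Cq_absorb hpoch hm
  have hz : ((p : ℝ) ^ 2) ^ (-(m + 1 : ℤ)) = (((p : ℝ) ^ 2) ^ (m + 1))⁻¹ := by
    rw [← Nat.cast_add_one, zpow_neg, zpow_natCast]
  have h1m : (1 : ℝ) - (p ^ 2) ^ (m + 1) ≠ 0 := one_sub_pow_ne hpoch m
  have hC : Cq (p ^ 2) (n + 1) (m + 1) =
      (1 - (p ^ 2) ^ (n + 1)) * Cq (p ^ 2) n m / (1 - (p ^ 2) ^ (m + 1)) := by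
    field_simp
    linarith [habs]
  unfold eE tT
  rw [hrec m, hz, hC]
  obtain ⟨e, he⟩ := Nat.exists_eq_add_of_le hm
  rw [show n + 1 - (m + 1) = e by omega, show n + 1 = m + e + 1 by omega,
    show m + 1 + 1 = m + 2 by omega]
  generalize h m ((p⁻¹ * b - p * b⁻¹) / 2) = X
  generalize h (m + 1) ((p⁻¹ * b - p * b⁻¹) / 2) = Y
  have hq : ((p : ℝ) ^ 2) ^ (m + 1) ≠ 0 := pow_ne_zero _ (pow_ne_zero _ hp)
  field_simp
  ring

lemma S_rec {p b : ℝ} (hp : p ≠ 0) (hb : b ≠ 0)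
    (hpoch : ∀ m : ℕ, qPoch (p ^ 2) (p ^ 2) m ≠ 0)
    (h : ℕ → ℝ → ℝ)
    (h0 : ∀ x, h 0 x = 1)
    (h1 : ∀ x, h 1 x = 2 * x)
    (hrec : ∀ (n : ℕ) (x : ℝ),
      h (n + 2) x = 2 * x * h (n + 1) x - ((p ^ 2) ^ (-(n + 1 : ℤ)) - 1) * h n x)
    (n : ℕ) :
    Sfun p b h (n + 2) =
      (1 + ((p ^ 2) ^ (n + 2) / b ^ 2 - (p ^ 2) ^ (n + 1))) * Sfun p b h (n + 1)
      - (p ^ 2) ^ (n + 1) * (1 - (p ^ 2) ^ (n + 1)) / b ^ 2 * Sfun p b h n := by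
  have step1 : Sfun p b h (n + 2) =
      Sfun p b h (n + 1) + ∑ k ∈ Finset.range (n + 2), eE p b h n k := by
    have A : Sfun p b h (n + 2) =
        (∑ k ∈ Finset.range (n + 1), tT p b h (n + 2) (k + 1)
          + tT p b h (n + 2) (n + 1 + 1)) + tT p b h (n + 2) 0 := by
      rw [Sfun, Finset.sum_range_succ' (tT p b h (n + 2)) (n + 2), Finset.sum_range_succ]
    rw [A,
      Finset.sum_congr rfl
        (fun k hk => L1 hpoch h (Nat.lt_succ_iff.mp (Finset.mem_range.mp hk))),
      Finset.sum_add_distrib, L2 hpoch h n, L3 hpoch h n,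
      Sfun, Finset.sum_range_succ' (tT p b h (n + 1)) (n + 1),
      Finset.sum_range_succ (eE p b h n) (n + 1)]
    ring
  have e0 : eE p b h n 0 =
      ((p ^ 2) ^ (n + 2) / b ^ 2 - (p ^ 2) ^ (n + 1)) * tT p b h (n + 1) 0 := by
    have hL := L4 (n := n) (k := 0) hp hb h (by omega)
    rw [← hL]
    unfold eE
    rw [h1, h0]
    ring
  have em : ∀ m ∈ Finset.range (n + 1), eE p b h n (m + 1) =
      ((p ^ 2) ^ (n + 2) / b ^ 2 - (p ^ 2) ^ (n + 1)) * tT p b h (n + 1) (m + 1)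
      - (p ^ 2) ^ (n + 1) * (1 - (p ^ 2) ^ (n + 1)) / b ^ 2 * tT p b h n m := by
    intro m hm
    have hm' : m ≤ n := Nat.lt_succ_iff.mp (Finset.mem_range.mp hm)
    rw [L5 hp hb hpoch h hrec hm', L4 hp hb h (by omega : m + 1 ≤ n + 1)]
  have step2 : ∑ k ∈ Finset.range (n + 2), eE p b h n k =
      ((p ^ 2) ^ (n + 2) / b ^ 2 - (p ^ 2) ^ (n + 1)) * Sfun p b h (n + 1)
      - (p ^ 2) ^ (n + 1) * (1 - (p ^ 2) ^ (n + 1)) / b ^ 2 * Sfun p b h n := by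
    rw [Finset.sum_range_succ' (eE p b h n) (n + 1), Finset.sum_congr rfl em, e0,
      Finset.sum_sub_distrib, ← Finset.mul_sum, ← Finset.mul_sum,
      Sfun, Sfun, Finset.sum_range_succ' (tT p b h (n + 1)) (n + 1)]
    ring
  rw [step1, step2]
  ring

lemma S_closed {p b : ℝ} (hp : p ≠ 0) (hb : b ≠ 0)
    (hpoch : ∀ m : ℕ, qPoch (p ^ 2) (p ^ 2) m ≠ 0)
    (h : ℕ → ℝ → ℝ)
    (h0 : ∀ x, h 0 x = 1)
    (h1 : ∀ x, h 1 x = 2 * x)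
    (hrec : ∀ (n : ℕ) (x : ℝ),
      h (n + 2) x = 2 * x * h (n + 1) x - ((p ^ 2) ^ (-(n + 1 : ℤ)) - 1) * h n x) :
    ∀ n : ℕ, Sfun p b h n = p ^ (n * (n + 1)) / b ^ (2 * n) := by
  have key : ∀ n : ℕ, Sfun p b h n = p ^ (n * (n + 1)) / b ^ (2 * n) ∧
      Sfun p b h (n + 1) = p ^ ((n + 1) * (n + 1 + 1)) / b ^ (2 * (n + 1)) := by
    intro n
    induction n with
    | zero =>
      constructor
      · simp [Sfun, tT, Cq_zero hpoch, h0]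
      · rw [Sfun, Finset.sum_range_succ, Finset.sum_range_succ, Finset.sum_range_zero]
        unfold tT
        rw [Cq_zero hpoch, Cq_self hpoch, h0, h1]
        field_simp
        ring
    | succ n ih =>
      refine ⟨ih.2, ?_⟩
      rw [S_rec hp hb hpoch h h0 h1 hrec n, ih.1, ih.2]
      have E1 : (n + 1) * (n + 1 + 1) = n * (n + 1) + 2 * (n + 1) := by ring
      have E2 : (n + 1 + 1) * (n + 1 + 1 + 1) = n * (n + 1) + (4 * n + 6) := by ring
      have E3 : ∀ m : ℕ, ((p : ℝ) ^ 2) ^ m = p ^ (2 * m) := by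
        intro m; rw [← pow_mul]
      rw [E1, E2, E3, E3,
        show 2 * (n + 1) = 2 * n + 2 by ring,
        show 2 * (n + 1 + 1) = 2 * n + 4 by ring,
        pow_add, pow_add]
      have hA : (p : ℝ) ^ (n * (n + 1)) ≠ 0 := pow_ne_zero _ hp
      have hB : (p : ℝ) ^ (2 * n) ≠ 0 := pow_ne_zero _ hp
      have hC : (b : ℝ) ^ (2 * n) ≠ 0 := pow_ne_zero _ hb
      field_simp
      ring
  exact fun n => (key n).1

/-- The summation identity of Lemma 2.10:
`(αⁿ / q^{n(n+1)/2}) Σ_{j=0}^n (-1)^j binom_q(n,j) q^{j(j+1)/2} (qα)^{-j/2} h_j(f(1)/2 | q) = 1`,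
where `f(s) = q^{-s/2} α^{1/2} - q^{s/2} α^{-1/2}` and `h_j` are the continuous
`q⁻¹`-Hermite polynomials.  We write `q = p²` and `α = b²` so that the square roots
`q^{1/2} = p`, `α^{1/2} = b`, `(qα)^{1/2} = p b` are well defined; the identity holds for any
nonzero `p`, `b` with `q = p² ≠ 1` for which the `q`-binomial coefficients are defined. -/
theorem qinvHermite_summation_identity
    (p b : ℝ) (hp : p ≠ 0) (hb : b ≠ 0) (hq1 : p ^ 2 ≠ 1)
    (hpoch : ∀ m : ℕ, qPoch (p ^ 2) (p ^ 2) m ≠ 0)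
    (h : ℕ → ℝ → ℝ)
    (h0 : ∀ x, h 0 x = 1)
    (h1 : ∀ x, h 1 x = 2 * x)
    (hrec : ∀ (n : ℕ) (x : ℝ),
      h (n + 2) x = 2 * x * h (n + 1) x - ((p ^ 2) ^ (-(n + 1 : ℤ)) - 1) * h n x) :
    ∀ n : ℕ,
      (b ^ (2 * n) / p ^ (n * (n + 1))) *
        ∑ j ∈ Finset.range (n + 1),
          (-1 : ℝ) ^ j *
            (qPoch (p ^ 2) (p ^ 2) n /
              (qPoch (p ^ 2) (p ^ 2) (n - j) * qPoch (p ^ 2) (p ^ 2) j)) *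
            p ^ (j * (j + 1)) * (p * b) ^ (-(j : ℤ)) *
            h j ((p⁻¹ * b - p * b⁻¹) / 2) = 1 := by

  intro n
  have hsum : (∑ j ∈ Finset.range (n + 1),
      (-1 : ℝ) ^ j *
        (qPoch (p ^ 2) (p ^ 2) n /
          (qPoch (p ^ 2) (p ^ 2) (n - j) * qPoch (p ^ 2) (p ^ 2) j)) *
        p ^ (j * (j + 1)) * (p * b) ^ (-(j : ℤ)) *
        h j ((p⁻¹ * b - p * b⁻¹) / 2)) = Sfun p b h n := by
    refine Finset.sum_congr rfl fun j _ => ?_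
    rw [tT, Cq]
    rw [zpow_neg, zpow_natCast, mul_pow,
      show j * (j + 1) = j * j + j by ring, pow_add]
    have hpj : (p : ℝ) ^ j ≠ 0 := pow_ne_zero _ hp
    have hbj : (b : ℝ) ^ j ≠ 0 := pow_ne_zero _ hb
    generalize h j ((p⁻¹ * b - p * b⁻¹) / 2) = X
    field_simp
  rw [hsum, S_closed hp hb hpoch h h0 h1 hrec n]
  have hA : (p : ℝ) ^ (n * (n + 1)) ≠ 0 := pow_ne_zero _ hp
  have hC : (b : ℝ) ^ (2 * n) ≠ 0 := pow_ne_zero _ hb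
  field_simp
end

section
/- Let q ∈ (0,1) and α > 0. Define m_n = α^{-2n} q^{n(2n-1)} (1 + α^{-1} q^{2n}) / ( (-α^{-1};q)_∞ (-qα;q)_∞ (q;q)_∞ ) for n ∈ ℤ, and let m̃_n be the same expression with α replaced by α/q. Then for all n ∈ ℤ: m̃_n = (q^{2n}/(α + q^{2n})) m_n + (α/(α + q^{2(n+1)})) m_{n+1}, and m_n = (q^{2n-1}/(α + q^{2n-1})) m̃_{n-1} + (α/(α + q^{2n+1})) m̃_n. -/
open Real

lemma multipliable_one_add_geom {q c : ℝ} (hq0 : 0 < q) (hq1 : q < 1) (hc : 0 ≤ c) :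
    Multipliable (fun k : ℕ => (1 + c * q ^ k)) := by
  have hpos : ∀ k : ℕ, 0 < 1 + c * q ^ k := fun k => by positivity
  have hsum : Summable fun k : ℕ => Real.log (1 + c * q ^ k) := by
    apply Summable.of_nonneg_of_le (fun k => Real.log_nonneg (by nlinarith [pow_pos hq0 k]))
      (fun k => ?_) (Summable.mul_left c (summable_geometric_of_lt_one hq0.le hq1))
    have := Real.log_le_sub_one_of_pos (hpos k)
    linarith
  exact Real.multipliable_of_summable_log hpos hsum

lemma tprod_one_add_shift {q c : ℝ} (hq0 : 0 < q) (hq1 : q < 1) (hc : 0 ≤ c) :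
    (∏' k : ℕ, (1 + c * q ^ k)) = (1 + c) * ∏' k : ℕ, (1 + c * q * q ^ k) := by
  have hm : Multipliable (fun k : ℕ => (1 + c * q ^ (k + 1))) := by
    have := multipliable_one_add_geom hq0 hq1 (c := c * q) (by positivity)
    apply this.congr
    intro k; rw [pow_succ]; ring
  have h : (∏' k : ℕ, (1 + c * q ^ k)) = (1 + c * q ^ (0:ℕ)) * ∏' k : ℕ, (1 + c * q ^ (k+1)) :=
    tprod_eq_zero_mul' hm
  rw [h]
  norm_num
  left
  apply tprod_congr
  intro k; rw [pow_succ]; ring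

lemma Zrel {q α : ℝ} (hq0 : 0 < q) (hq1 : q < 1) (hα : 0 < α) :
    (∏' k : ℕ, (1 + (α / q)⁻¹ * q ^ k)) * (∏' k : ℕ, (1 + q * (α / q) * q ^ k)) *
      (∏' k : ℕ, (1 - q * q ^ k)) =
    α * ((∏' k : ℕ, (1 + α⁻¹ * q ^ k)) * (∏' k : ℕ, (1 + q * α * q ^ k)) *
      (∏' k : ℕ, (1 - q * q ^ k))) := by
  have hq : q ≠ 0 := hq0.ne'
  have hα' : α ≠ 0 := hα.ne'
  have e1 : (∏' k : ℕ, (1 + α⁻¹ * q ^ k)) =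
      (1 + α⁻¹) * ∏' k : ℕ, (1 + (α / q)⁻¹ * q ^ k) := by
    have := tprod_one_add_shift hq0 hq1 (c := α⁻¹) (by positivity)
    rw [this]
    congr 1
    apply tprod_congr; intro k
    rw [inv_div]
    ring
  have e2 : (∏' k : ℕ, (1 + q * (α / q) * q ^ k)) =
      (∏' k : ℕ, (1 + α * q ^ k)) := by
    apply tprod_congr; intro k
    rw [mul_div_cancel₀ _ hq]
  have e3 : (∏' k : ℕ, (1 + α * q ^ k)) =
      (1 + α) * ∏' k : ℕ, (1 + q * α * q ^ k) := by
    have := tprod_one_add_shift hq0 hq1 (c := α) hα.le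
    rw [this]
    congr 1
    apply tprod_congr; intro k; ring
  rw [e1, e2, e3]
  have hi : α * α⁻¹ = 1 := mul_inv_cancel₀ hα'
  linear_combination (-((∏' k : ℕ, (1 + (α / q)⁻¹ * q ^ k)) *
    (∏' k : ℕ, (1 + q * α * q ^ k)) * (∏' k : ℕ, (1 - q * q ^ k)))) * hi

lemma combine1 {X N1 N2 c1 c2 α Z : ℝ} (h : X / α = c1 * N1 + c2 * N2) :
    X / (α * Z) = c1 * (N1 / Z) + c2 * (N2 / Z) := by
  rw [← div_div, h, add_div, mul_div_assoc, mul_div_assoc]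

lemma combine2 {N X1 X2 c1 c2 α Z : ℝ} (h : N = c1 * (X1 / α) + c2 * (X2 / α)) :
    N / Z = c1 * (X1 / (α * Z)) + c2 * (X2 / (α * Z)) := by
  rw [h, add_div, mul_div_assoc, mul_div_assoc, div_div, div_div]

/-- The one-point weights `m_n` of the stationary initial data for dynamic ASEP, with
normalization constant `(-α⁻¹;q)_∞ (-qα;q)_∞ (q;q)_∞` expressed via infinite products. -/
noncomputable def statWeight (q α : ℝ) (n : ℤ) : ℝ :=
  α ^ (-(2 * n)) * q ^ (n * (2 * n - 1)) * (1 + α⁻¹ * q ^ (2 * n)) /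
    ((∏' k : ℕ, (1 + α⁻¹ * q ^ k)) * (∏' k : ℕ, (1 + q * α * q ^ k)) *
      (∏' k : ℕ, (1 - q * q ^ k)))

/-- The weights `m_n` (on even heights) and `m̃_n` (on odd heights, obtained by replacing `α`
with `α/q`) are intertwined by the transition kernel of the half-stationary random walk. -/
theorem stationary_weights_intertwining
    (q α : ℝ) (hq0 : 0 < q) (hq1 : q < 1) (hα : 0 < α) :
    ∀ n : ℤ,
      (statWeight q (α / q) n =
        q ^ (2 * n) / (α + q ^ (2 * n)) * statWeight q α n +
          α / (α + q ^ (2 * (n + 1))) * statWeight q α (n + 1)) ∧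
      (statWeight q α n =
        q ^ (2 * n - 1) / (α + q ^ (2 * n - 1)) * statWeight q (α / q) (n - 1) +
          α / (α + q ^ (2 * n + 1)) * statWeight q (α / q) n) := by
  have hq : q ≠ 0 := hq0.ne'
  have hα' : α ≠ 0 := hα.ne'
  have hZ := Zrel hq0 hq1 hα
  intro n
  have hq2 : q ^ (2:ℤ) = q ^ (2:ℕ) := by norm_cast
  have hq3 : q ^ (3:ℤ) = q ^ (3:ℕ) := by norm_cast
  have hα2 : α ^ (2:ℤ) = α ^ (2:ℕ) := by norm_cast
  have ht : (0:ℝ) < q ^ (2 * n) := zpow_pos hq0 _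
  have hA : (0:ℝ) < α ^ (-(2 * n)) := zpow_pos hα _
  have hP : (0:ℝ) < q ^ (n * (2 * n - 1)) := zpow_pos hq0 _
  have f1 : (α / q) ^ (-(2 * n)) = α ^ (-(2 * n)) * q ^ (2 * n) := by
    rw [div_zpow, zpow_neg q, div_eq_mul_inv, inv_inv]
  have f2 : q ^ (2 * (n + 1)) = q ^ (2 * n) * q ^ (2:ℕ) := by
    rw [show 2 * (n + 1) = 2 * n + (2:ℤ) by ring, zpow_add₀ hq, hq2]
  have f3 : q ^ ((n + 1) * (2 * (n + 1) - 1)) =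
      q ^ (n * (2 * n - 1)) * (q ^ (2 * n) * q ^ (2 * n) * q) := by
    rw [show (n + 1) * (2 * (n + 1) - 1) = n * (2 * n - 1) + (2 * n + (2 * n + 1)) by ring,
      zpow_add₀ hq, zpow_add₀ hq, zpow_add₀ hq, zpow_one]
    ring
  have f4 : α ^ (-(2 * (n + 1))) = α ^ (-(2 * n)) * (α ^ (2:ℕ))⁻¹ := by
    rw [show -(2 * (n + 1)) = -(2 * n) + (-(2:ℤ)) by ring, zpow_add₀ hα']
    congr 1
  have f5 : q ^ (2 * n - 1) = q ^ (2 * n) * q⁻¹ := by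
    rw [show 2 * n - 1 = 2 * n + (-1) by ring, zpow_add₀ hq, zpow_neg, zpow_one]
  have f6 : q ^ (2 * n + 1) = q ^ (2 * n) * q := by
    rw [zpow_add₀ hq, zpow_one]
  have f7 : (α / q) ^ (-(2 * (n - 1))) =
      α ^ (-(2 * n)) * α ^ (2:ℕ) * (q ^ (2 * n) * (q ^ (2:ℕ))⁻¹) := by
    rw [div_zpow, show -(2 * (n - 1)) = -(2 * n) + (2:ℤ) by ring, zpow_add₀ hα',
      zpow_add₀ hq, hα2, hq2, zpow_neg q]
    field_simp
  have f8 : q ^ ((n - 1) * (2 * (n - 1) - 1)) =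
      q ^ (n * (2 * n - 1)) * q ^ (3:ℕ) * ((q ^ (2 * n)) ^ (2:ℕ))⁻¹ := by
    rw [show (n - 1) * (2 * (n - 1) - 1) = n * (2 * n - 1) + ((3:ℤ) - (2 * n + 2 * n)) by ring,
      zpow_add₀ hq, zpow_sub₀ hq, zpow_add₀ hq, hq3]
    field_simp
  have f9 : q ^ (2 * (n - 1)) = q ^ (2 * n) * (q ^ (2:ℕ))⁻¹ := by
    rw [show 2 * (n - 1) = 2 * n + (-(2:ℤ)) by ring, zpow_add₀ hq, zpow_neg, hq2]
  have hinv : (α / q)⁻¹ = α⁻¹ * q := by rw [inv_div]; ring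
  unfold statWeight
  rw [hZ, hinv, f1, f2, f3, f4, f5, f6, f7, f8, f9]
  constructor
  · apply combine1
    have h1 : α + q ^ (2 * n) ≠ 0 := by positivity
    have h2 : α + q ^ (2 * n) * q ^ (2:ℕ) ≠ 0 := by positivity
    field_simp
  · apply combine2
    have h1 : α + q ^ (2 * n) * q⁻¹ ≠ 0 := by positivity
    have h2 : α + q ^ (2 * n) * q ≠ 0 := by positivity
    field_simp
end

section
/- Let q ∈ (0,1) and α > 0. For an integer s, the probability under the stationary measure of the local height pattern ∧ (up then down, starting and ending at height s) is P_∧ = (q^s/(α + q^s)) · (α/(α + q^{s+1})), and of the pattern ∨ (down then up) is P_∨ = (α/(α + q^s)) · (q^{s-1}/(α + q^{s-1})). Then P_∧ / P_∨ = q^{-1} (1 + α q^{-s+1}) / (1 + α q^{-s-1}), i.e., the ratio of pattern probabilities equals the ratio rate(s-1 ↦ s+1)/rate(s+1 ↦ s-1) of dynamic ASEP jump rates, so detailed balance holds. -/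
/-- Detailed balance for the stationary measure of dynamic ASEP: the ratio of the probabilities
of the local height patterns `∧` and `∨` at height `s` equals the ratio of the corresponding
dynamic ASEP jump rates `rate(s-1 ↦ s+1)/rate(s+1 ↦ s-1)`. -/
theorem dynamicASEP_detailed_balance
    (q α : ℝ) (hq0 : 0 < q) (hq1 : q < 1) (hα : 0 < α) (s : ℤ) :
    ((q ^ s / (α + q ^ s)) * (α / (α + q ^ (s + 1)))) /
        ((α / (α + q ^ s)) * (q ^ (s - 1) / (α + q ^ (s - 1)))) =
      q⁻¹ * (1 + α * q ^ (-s + 1)) / (1 + α * q ^ (-s - 1)) ∧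
    ((q ^ s / (α + q ^ s)) * (α / (α + q ^ (s + 1)))) /
        ((α / (α + q ^ s)) * (q ^ (s - 1) / (α + q ^ (s - 1)))) =
      ((1 + α * q ^ (-(s - 1))) / (1 + α * q ^ (-(s - 1) - 1))) /
        (q * (1 + α * q ^ (-(s + 1))) / (1 + α * q ^ (-(s + 1) + 1))) := by
  have hne : q ≠ 0 := ne_of_gt hq0
  have ht : (0:ℝ) < q ^ s := zpow_pos hq0 s
  have e1 : q ^ (s + 1) = q ^ s * q := by rw [zpow_add_one₀ hne]
  have e2 : q ^ (s - 1) = q ^ s / q := by rw [zpow_sub_one₀ hne, div_eq_mul_inv]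
  have e3 : q ^ (-s + 1) = (q ^ s)⁻¹ * q := by
    rw [zpow_add₀ hne, zpow_neg, zpow_one]
  have e4 : q ^ (-s - 1) = (q ^ s)⁻¹ / q := by
    rw [zpow_sub₀ hne, zpow_neg, zpow_one]
  have e5 : q ^ (-(s - 1)) = (q ^ s)⁻¹ * q := by
    rw [neg_sub, zpow_sub₀ hne, zpow_one]; field_simp
  have e6 : q ^ (-(s - 1) - 1) = (q ^ s)⁻¹ := by
    rw [neg_sub, sub_sub, zpow_sub₀ hne, e1]
    field_simp
  have e7 : q ^ (-(s + 1)) = (q ^ s)⁻¹ / q := by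
    rw [neg_add, zpow_add₀ hne, zpow_neg, zpow_neg, zpow_one]; ring
  have e8 : q ^ (-(s + 1) + 1) = (q ^ s)⁻¹ := by
    rw [neg_add, add_assoc, neg_add_cancel, add_zero, zpow_neg]
  set t := q ^ s with hts
  have htne : t ≠ 0 := ne_of_gt ht
  have h1 : α + t ≠ 0 := by positivity
  have h2 : α + t * q ≠ 0 := by positivity
  have h3 : α + t / q ≠ 0 := by positivity
  have h4 : 1 + α * (t⁻¹ * q) ≠ 0 := by positivity
  have h5 : 1 + α * (t⁻¹ / q) ≠ 0 := by positivity
  have h6 : 1 + α * t⁻¹ ≠ 0 := by positivity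
  rw [e1, e2, e3, e4, e5, e6, e7, e8]
  constructor <;> field_simp <;> ring
end

section
/- Let α > 0 and let z_1, z_2, ... be i.i.d. Bernoulli with P(z_i = 1) = 1/(α+1), y(t) = z_1 + ... + z_t for t ≥ 1, y(t) = 0 for t ≤ 0. If integers t_1 ≤ ... ≤ t_n satisfy t_{k+1} = k for some k ∈ {0,...,n-1}, then ∏_{j=1}^n (y(t_j) - j + 1) = 0 almost surely; in particular E[ ∏_{j=1}^n (y(t_j) - j + 1) ] = 0. -/
open MeasureTheory Finset

/-- The partial-sum path `y(t) = z_1 + … + z_t` for `t ≥ 1`, `y(t) = 0` for `t ≤ 0`. -/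
noncomputable def bernoulliPath (z : ℕ → ℝ) (t : ℤ) : ℝ :=
  if 1 ≤ t then ∑ i ∈ Finset.Icc 1 t.toNat, z i else 0

/-- Discrete IVT: if an integer sequence decreases by at most 1 per step,
starts ≥ 0 and ends ≤ 0 at step `k`, it hits 0. -/
lemma discrete_ivt (g : ℕ → ℤ) (k : ℕ) (hstep : ∀ j, j < k → g j - 1 ≤ g (j + 1))
    (h0 : 0 ≤ g 0) (hk : g k ≤ 0) : ∃ j ≤ k, g j = 0 := by
  induction k with
  | zero => exact ⟨0, le_refl 0, le_antisymm hk h0⟩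
  | succ k ih =>
    by_cases h : g k ≤ 0
    · obtain ⟨j, hj, hjz⟩ := ih (fun j hj => hstep j (by omega)) h
      exact ⟨j, hj.trans (Nat.le_succ k), hjz⟩
    · have hs := hstep k (by omega)
      exact ⟨k + 1, le_refl _, by omega⟩

/-- If the Bernoulli variables take values in `{0,1}` almost surely, `t_1 ≤ ⋯ ≤ t_n` and
`t_{k+1} = k` for some `k ∈ {0,…,n-1}` (indices shifted: here `t k = k` for some `k < n`),
then `∏_{j=1}^n (y(t_j) - j + 1) = 0` almost surely, and in particular its expectation is `0`. -/
theorem bernoulli_path_product_vanishes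
    {Ω : Type*} [MeasurableSpace Ω] (μ : Measure Ω) [IsProbabilityMeasure μ]
    (α : ℝ) (hα : 0 < α)
    (z : ℕ → Ω → ℝ)
    (hval : ∀ i, ∀ᵐ ω ∂μ, z i ω = 0 ∨ z i ω = 1)
    (n : ℕ) (t : ℕ → ℤ)
    (hmono : ∀ i j : ℕ, i ≤ j → j < n → t i ≤ t j)
    (hk : ∃ k : ℕ, k < n ∧ t k = (k : ℤ)) :
    (∀ᵐ ω ∂μ, ∏ j ∈ Finset.range n, (bernoulliPath (fun i => z i ω) (t j) - j) = 0) ∧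
      (∫ ω, ∏ j ∈ Finset.range n, (bernoulliPath (fun i => z i ω) (t j) - j) ∂μ) = 0 := by
  obtain ⟨k, hkn, htk⟩ := hk
  have hall : ∀ᵐ ω ∂μ, ∀ i, z i ω = 0 ∨ z i ω = 1 := ae_all_iff.mpr hval
  have hae : ∀ᵐ ω ∂μ,
      ∏ j ∈ Finset.range n, (bernoulliPath (fun i => z i ω) (t j) - j) = 0 := by
    filter_upwards [hall] with ω hω
    set f : ℕ → ℕ := fun i => if z i ω = 1 then 1 else 0 with hf
    set Y : ℤ → ℕ := fun s => if 1 ≤ s then ∑ i ∈ Finset.Icc 1 s.toNat, f i else 0 with hYdef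
    have hY : ∀ s : ℤ, bernoulliPath (fun i => z i ω) s = (Y s : ℝ) := by
      intro s
      simp only [bernoulliPath, hYdef]
      split
      · push_cast
        refine Finset.sum_congr rfl fun i _ => ?_
        rcases hω i with h | h <;> simp [hf, h]
      · simp
    have hYmono : ∀ s u : ℤ, s ≤ u → Y s ≤ Y u := by
      intro s u hsu
      simp only [hYdef]
      split
      · rename_i h1
        rw [if_pos (h1.trans hsu)]
        exact Finset.sum_le_sum_of_subset
          (Finset.Icc_subset_Icc le_rfl (Int.toNat_le_toNat hsu))
      · positivity
    have hYle : Y (k : ℤ) ≤ k := by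
      simp only [hYdef]
      split
      · calc ∑ i ∈ Finset.Icc 1 (k : ℤ).toNat, f i
            ≤ ∑ i ∈ Finset.Icc 1 (k : ℤ).toNat, 1 := by
              refine Finset.sum_le_sum fun i _ => ?_
              simp only [hf]; split <;> omega
          _ = k := by simp
      · omega
    set g : ℕ → ℤ := fun j => (Y (t j) : ℤ) - j with hg
    have hstep : ∀ j, j < k → g j - 1 ≤ g (j + 1) := by
      intro j hj
      have hm := hYmono (t j) (t (j + 1)) (hmono j (j + 1) (by omega) (by omega))
      simp only [hg]
      push_cast
      omega
    have h0 : 0 ≤ g 0 := by simp [hg]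
    have hkle : g k ≤ 0 := by
      simp only [hg, htk]
      omega
    obtain ⟨j, hjk, hj0⟩ := discrete_ivt g k hstep h0 hkle
    refine Finset.prod_eq_zero (Finset.mem_range.mpr (lt_of_le_of_lt hjk hkn)) ?_
    rw [hY]
    have : ((Y (t j) : ℤ) : ℝ) = (j : ℝ) := by
      have : (Y (t j) : ℤ) = (j : ℤ) := by simp only [hg] at hj0; omega
      exact_mod_cast this
    push_cast at this ⊢
    linarith
  refine ⟨hae, integral_eq_zero_of_ae ?_⟩
  filter_upwards [hae] with ω h using h
end

section
/- Let q ∈ (0,1), α > 0, f(s) = q^{-s/2} α^{1/2} - q^{s/2} α^{-1/2}, K the operator (Kg)(s) = (q^s/(α+q^s)) g(s+1) + (α/(α+q^s)) g(s-1), and h_n the continuous q^{-1}-Hermite polynomials. Then for every integer n ≥ 0 and every s ∈ ℤ: (K h_n(f(·)/2 | q))(s) = q^{n/2} h_n(f(s)/2 | q). -/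
/-- `f(s) = q^{-s/2} α^{1/2} - q^{s/2} α^{-1/2}`. -/
noncomputable def fEig (q α : ℝ) (s : ℤ) : ℝ :=
  Real.sqrt α * (Real.sqrt q) ^ (-s) - (Real.sqrt α)⁻¹ * (Real.sqrt q) ^ s

/-- The one-step transition operator `K` of the half-stationary random walk:
`(Kg)(s) = (q^s/(α+q^s)) g(s+1) + (α/(α+q^s)) g(s-1)`. -/
noncomputable def Kop (q α : ℝ) (g : ℤ → ℝ) (s : ℤ) : ℝ :=
  q ^ s / (α + q ^ s) * g (s + 1) + α / (α + q ^ s) * g (s - 1)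

private lemma CD_shift (r : ℝ) (hr0 : 0 < r) (hr1 : r < 1) (h : ℕ → ℝ → ℝ)
    (h0 : ∀ x, h 0 x = 1) (h1 : ∀ x, h 1 x = 2 * x)
    (hrec : ∀ (n : ℕ) (x : ℝ), h (n + 2) x
        = 2 * x * h (n + 1) x - ((r ^ 2) ^ (-(n + 1 : ℤ)) - 1) * h n x) :
    ∀ (n : ℕ) (z : ℝ), z ≠ 0 →
      (h n ((z / r - r / z) / 2)
          = r ^ n * h n ((z - z⁻¹) / 2)
            + ((r ^ n)⁻¹ - r ^ n) * z * h (n - 1) ((z - z⁻¹) / 2)) ∧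
      (h n ((z * r - (z * r)⁻¹) / 2)
          = r ^ n * h n ((z - z⁻¹) / 2)
            - ((r ^ n)⁻¹ - r ^ n) * z⁻¹ * h (n - 1) ((z - z⁻¹) / 2)) := by
  have hrne : r ≠ 0 := ne_of_gt hr0
  -- coefficient rewriting
  have hc : ∀ k : ℕ, ((r ^ 2 : ℝ)) ^ (-(k + 1 : ℤ)) = ((r ^ (k+1)) ^ 2)⁻¹ := by
    intro k
    rw [zpow_neg]
    congr 1
    rw [show (k + 1 : ℤ) = ((k + 1 : ℕ) : ℤ) by push_cast; ring, zpow_natCast]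
    ring
  intro n
  induction n using Nat.strong_induction_on with
  | _ n ih =>
    match n with
    | 0 =>
      intro z hz
      constructor <;> simp [h0]
    | 1 =>
      intro z hz
      constructor <;> (rw [h1, h1]; simp only [Nat.sub_self, h0]; field_simp; ring)
    | (m+2) =>
      intro z hz
      have IH1 := ih (m+1) (by omega) z hz
      have IH0 := ih m (by omega) z hz
      simp only [show m + 1 - 1 = m from rfl] at IH1
      -- auxiliary identity eliminating h (m-1)
      have aux : ∀ w : ℝ, ((r ^ m)⁻¹ - r ^ m) * w * h (m - 1) ((z - z⁻¹) / 2)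
          = r ^ m * w * ((z - z⁻¹) * h m ((z - z⁻¹) / 2) - h (m + 1) ((z - z⁻¹) / 2)) := by
        intro w
        match m with
        | 0 => simp only [show (0:ℕ) - 1 = 0 from rfl, h0, h1, pow_zero, inv_one, sub_self,
            zero_mul, one_mul]; ring
        | (k+1) =>
          rw [show k + 1 - 1 = k from rfl, hrec k ((z - z⁻¹) / 2), hc k]
          field_simp
          ring
      constructor
      · rw [hrec m ((z / r - r / z) / 2), hrec m ((z - z⁻¹) / 2),
          show m + 2 - 1 = m + 1 from rfl, IH1.1, IH0.1, aux z, hc m]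
        field_simp
        ring
      · rw [hrec m ((z * r - (z * r)⁻¹) / 2), hrec m ((z - z⁻¹) / 2),
          show m + 2 - 1 = m + 1 from rfl, IH1.2, IH0.2, aux z⁻¹, hc m]
        field_simp
        ring
      
/-- Eigenfunction lemma: the functions `s ↦ h_n(f(s)/2 | q)` diagonalize `K` with eigenvalues
`q^{n/2}`, where `h_n` are the continuous `q⁻¹`-Hermite polynomials. -/
theorem eigenrelation_qinvHermite
    (q α : ℝ) (hq0 : 0 < q) (hq1 : q < 1) (hα : 0 < α)
    (h : ℕ → ℝ → ℝ)
    (h0 : ∀ x, h 0 x = 1)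
    (h1 : ∀ x, h 1 x = 2 * x)
    (hrec : ∀ (n : ℕ) (x : ℝ),
      h (n + 2) x = 2 * x * h (n + 1) x - (q ^ (-(n + 1 : ℤ)) - 1) * h n x) :
    ∀ (n : ℕ) (s : ℤ),
      Kop q α (fun s' => h n (fEig q α s' / 2)) s =
        (Real.sqrt q) ^ n * h n (fEig q α s / 2) := by
  intro n s
  set r := Real.sqrt q with hrdef
  have hr0 : 0 < r := Real.sqrt_pos.mpr hq0
  have hrne : r ≠ 0 := ne_of_gt hr0
  have hr1 : r < 1 := by
    rw [hrdef, show (1:ℝ) = Real.sqrt 1 by simp]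
    exact Real.sqrt_lt_sqrt hq0.le hq1
  have hrq : r ^ 2 = q := Real.sq_sqrt hq0.le
  have ha0 : 0 < Real.sqrt α := Real.sqrt_pos.mpr hα
  set a := Real.sqrt α with hadef
  have hane : a ≠ 0 := ne_of_gt ha0
  have haq : a ^ 2 = α := Real.sq_sqrt hα.le
  set w : ℝ := r ^ s with hw
  have hwne : w ≠ 0 := zpow_ne_zero _ hrne
  set z : ℝ := a * w⁻¹ with hzdef
  have hz : z ≠ 0 := mul_ne_zero hane (inv_ne_zero hwne)
  have hqs : (q : ℝ) ^ s = w ^ 2 := by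
    rw [← hrq, hw, ← zpow_natCast (r ^ s) 2, ← zpow_mul, mul_comm,
      ← zpow_natCast r 2, ← zpow_mul]
  have hzinv : z⁻¹ = a⁻¹ * w := by
    rw [hzdef, mul_inv, inv_inv]
  have e0 : fEig q α s = z - z⁻¹ := by
    rw [fEig, hzinv, hzdef, ← hadef, ← hrdef, ← hw, zpow_neg]
  have e1 : fEig q α (s + 1) = z / r - r / z := by
    rw [fEig, ← hadef, ← hrdef, zpow_neg, zpow_add_one₀ hrne, ← hw]
    rw [hzdef]
    field_simp
  have e2 : fEig q α (s - 1) = z * r - (z * r)⁻¹ := by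
    rw [fEig, ← hadef, ← hrdef, zpow_neg, zpow_sub_one₀ hrne, ← hw]
    rw [hzdef]
    field_simp
  have hrec' : ∀ (n : ℕ) (x : ℝ), h (n + 2) x
      = 2 * x * h (n + 1) x - ((r ^ 2) ^ (-(n + 1 : ℤ)) - 1) * h n x := by
    intro n x; rw [hrq]; exact hrec n x
  obtain ⟨C, D⟩ := CD_shift r hr0 hr1 h h0 h1 hrec' n z hz
  rw [Kop]
  simp only [e1, e2, e0]
  rw [C, D, hqs, ← haq, hzdef, hzinv]
  have hden : a ^ 2 + w ^ 2 ≠ 0 := by positivity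
  field_simp
  ring
end
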